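/- Positive invariance for the TB submodel: let (S, T_L, T_I, T_T) : [0,∞) → ℝ⁴ be a continuously differentiable solution of the TB submodel with N(t) = S+T_L+T_I+T_T and N(t) > 0. If all four components are nonnegative at t = 0 and N(0) ≤ Λ/d, then all four components remain nonnegative and N(t) ≤ Λ/d for every t ≥ 0; that is, the region D1 = {(S, T_L, T_I, T_T) ∈ ℝ₊⁴ : S+T_L+T_I+T_T ≤ Λ/d} is positively invariant. -/

import Mathlib

open Set Filter Topology

lemma hasDerivAt_maxsq (x : ℝ) : HasDerivAt (fun y : ℝ => max y 0 ^ 2) (2 * max x 0) x := by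
  rcases lt_trichotomy x 0 with hx | rfl | hx
  · have h : (fun y : ℝ => max y 0 ^ 2) =ᶠ[𝓝 x] fun _ => (0 : ℝ) := by
      filter_upwards [Iio_mem_nhds hx] with y hy
      simp [max_eq_right (le_of_lt (mem_Iio.mp hy))]
    have := (hasDerivAt_const x (0 : ℝ)).congr_of_eventuallyEq h
    simpa [max_eq_right hx.le] using this
  · rw [hasDerivAt_iff_isLittleO]
    simp only [max_self, mul_zero, smul_zero, sub_zero, ne_eq, zero_pow, sub_self]
    have : (fun y : ℝ => max y 0 ^ 2 - 0 ^ 2) =o[𝓝 0] fun y => y - 0 := by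
      simp only [sub_zero]
      rw [Asymptotics.isLittleO_iff]
      intro c hc
      filter_upwards [Metric.ball_mem_nhds (0 : ℝ) hc] with y hy
      have h1 : |max y 0| ≤ |y| := by
        rcases le_total y 0 with h | h
        · simp [max_eq_right h]
        · simp [max_eq_left h, abs_of_nonneg h]
      have h2 : |y| < c := by simpa [Real.dist_eq] using hy
      calc ‖max y 0 ^ 2 - 0 ^ 2‖ = |max y 0| * |max y 0| := by
            rw [Real.norm_eq_abs]
            rw [show max y 0 ^ 2 - 0 ^ 2 = max y 0 ^ 2 by ring, ← sq_abs, sq,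
              abs_of_nonneg (mul_nonneg (abs_nonneg _) (abs_nonneg _))]
          _ ≤ c * |y| := by
            apply mul_le_mul (h1.trans h2.le) h1 (abs_nonneg _) hc.le
          _ = c * ‖y‖ := rfl
    simpa using this
  · have h : (fun y : ℝ => max y 0 ^ 2) =ᶠ[𝓝 x] fun y => y ^ 2 := by
      filter_upwards [Ioi_mem_nhds hx] with y hy
      simp [max_eq_left (mem_Ioi.mp hy).le]
    have := ((hasDerivAt_pow 2 x)).congr_of_eventuallyEq h
    simpa [max_eq_left hx.le, mul_comm] using this

lemma max_mul_self (x : ℝ) : max x 0 * x = max x 0 ^ 2 := by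
  rcases le_total x 0 with h | h
  · simp [max_eq_right h]
  · simp [max_eq_left h, sq]

lemma scalar_gronwall {f f' : ℝ → ℝ} {K a b : ℝ}
    (hf : ContinuousOn f (Icc a b))
    (hf' : ∀ x ∈ Ico a b, HasDerivWithinAt f (f' x) (Ici x) x)
    (ha : f a ≤ 0) (bound : ∀ x ∈ Ico a b, f' x ≤ K * f x) :
    ∀ x ∈ Icc a b, f x ≤ 0 := by
  intro x hx
  have := le_gronwallBound_of_liminf_deriv_right_le hf
    (fun x hx r hr => (hf' x hx).liminf_right_slope_le hr) ha
    (show ∀ x ∈ Ico a b, f' x ≤ K * f x + 0 by simpa using bound) x hx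
  simpa [gronwallBound_ε0_δ0] using this

lemma neg_mul_le_aux {x y M : ℝ} (hx : |x| ≤ M) (hy : |y| ≤ M) :
    -(x * y) ≤ M * (max (-x) 0 + max (-y) 0) := by
  have hM0 : 0 ≤ M := (abs_nonneg x).trans hx
  rcases le_total 0 x with h | h
  · rcases le_total 0 y with h' | h'
    · nlinarith [mul_nonneg h h',
        mul_nonneg hM0 (add_nonneg (le_max_right (-x) (0:ℝ)) (le_max_right (-y) (0:ℝ)))]
    · rw [max_eq_left (neg_nonneg.2 h')]
      nlinarith [mul_le_mul_of_nonneg_right ((le_abs_self x).trans hx) (neg_nonneg.2 h'),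
        mul_nonneg hM0 (le_max_right (-x) (0:ℝ))]
  · rw [max_eq_left (neg_nonneg.2 h)]
    nlinarith [mul_le_mul_of_nonneg_left ((le_abs_self y).trans hy) (neg_nonneg.2 h),
      mul_nonneg hM0 (le_max_right (-y) (0:ℝ))]

lemma contOn_maxsq {f : ℝ → ℝ} {s : Set ℝ} (h : ContinuousOn f s) :
    ContinuousOn (fun x => max (-(f x)) 0 ^ 2) s := by
  apply ContinuousOn.pow
  exact fun x hx => ((h x hx).neg).sup continuousWithinAt_const

lemma maxsq_nonpos {x : ℝ} (h : max (-x) 0 ^ 2 ≤ 0) : 0 ≤ x := by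
  nlinarith [le_max_left (-x) (0:ℝ), le_max_right (-x) (0:ℝ)]

set_option maxHeartbeats 1000000 in
/-- Positive invariance of the region `D1` for the TB submodel: nonnegativity of all
components is preserved and the total population stays below `Λ/d`. -/
theorem TB_positive_invariance (Lam d dT k1 r r1 be : ℝ)
    (hLam : 0 < Lam) (hd : 0 < d) (hdT : 0 < dT) (hk1 : 0 < k1)
    (hr : 0 < r) (hr1 : 0 < r1) (hbe : 0 < be)
    (S TL TI TT N : ℝ → ℝ)
    (hN : ∀ t, N t = S t + TL t + TI t + TT t)
    (hNpos : ∀ t ≥ (0 : ℝ), 0 < N t)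
    (hS : ∀ t ≥ (0 : ℝ), HasDerivAt S (Lam - be * S t * TI t / N t - d * S t + r1 * TT t) t)
    (hTL : ∀ t ≥ (0 : ℝ), HasDerivAt TL (be * S t * TI t / N t - (d + k1) * TL t) t)
    (hTI : ∀ t ≥ (0 : ℝ), HasDerivAt TI (k1 * TL t - (d + dT + r) * TI t) t)
    (hTT : ∀ t ≥ (0 : ℝ), HasDerivAt TT (r * TI t - (r1 + d + dT) * TT t) t)
    (h0 : 0 ≤ S 0 ∧ 0 ≤ TL 0 ∧ 0 ≤ TI 0 ∧ 0 ≤ TT 0)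
    (hN0le : N 0 ≤ Lam / d) :
    ∀ t ≥ (0 : ℝ), (0 ≤ S t ∧ 0 ≤ TL t ∧ 0 ≤ TI t ∧ 0 ≤ TT t) ∧ N t ≤ Lam / d := by
  intro t ht
  -- continuity on [0, t]
  have hScont : ContinuousOn S (Icc 0 t) :=
    fun s hs => ((hS s hs.1).continuousAt).continuousWithinAt
  have hTLcont : ContinuousOn TL (Icc 0 t) :=
    fun s hs => ((hTL s hs.1).continuousAt).continuousWithinAt
  have hTIcont : ContinuousOn TI (Icc 0 t) :=
    fun s hs => ((hTI s hs.1).continuousAt).continuousWithinAt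
  have hTTcont : ContinuousOn TT (Icc 0 t) :=
    fun s hs => ((hTT s hs.1).continuousAt).continuousWithinAt
  have hNcont : ContinuousOn N (Icc 0 t) :=
    ContinuousOn.congr (((hScont.add hTLcont).add hTIcont).add hTTcont) (fun s _ => hN s)
  -- bounds on |S| and |TI|
  obtain ⟨M1, hM1⟩ := isCompact_Icc.exists_bound_of_continuousOn hScont
  obtain ⟨M2, hM2⟩ := isCompact_Icc.exists_bound_of_continuousOn hTIcont
  obtain ⟨M, hMS, hMTI⟩ : ∃ M, (∀ s ∈ Icc (0:ℝ) t, |S s| ≤ M) ∧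
      (∀ s ∈ Icc (0:ℝ) t, |TI s| ≤ M) :=
    ⟨max M1 M2, fun s hs => (hM1 s hs).trans (le_max_left _ _),
      fun s hs => (hM2 s hs).trans (le_max_right _ _)⟩
  have h0mem : (0:ℝ) ∈ Icc (0:ℝ) t := ⟨le_refl _, ht⟩
  have hM0 : 0 ≤ M := (abs_nonneg _).trans (hMS 0 h0mem)
  -- positive lower bound for N
  obtain ⟨s0, hs0, hmin⟩ := isCompact_Icc.exists_isMinOn (nonempty_Icc.2 ht) hNcont
  obtain ⟨c, hc, hcN⟩ : ∃ c, 0 < c ∧ ∀ s ∈ Icc (0:ℝ) t, c ≤ N s :=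
    ⟨N s0, hNpos s0 hs0.1, fun s hs => hmin hs⟩
  obtain ⟨B, hBdef⟩ : ∃ B : ℝ, B = be * M / c := ⟨_, rfl⟩
  have hB0 : 0 ≤ B := hBdef ▸ div_nonneg (mul_nonneg hbe.le hM0) hc.le
  -- Gronwall for the sum of squared negative parts
  have gle : ∀ s ∈ Icc (0:ℝ) t,
      max (-(S s)) 0 ^ 2 + max (-(TL s)) 0 ^ 2 + max (-(TI s)) 0 ^ 2 + max (-(TT s)) 0 ^ 2
        ≤ 0 := by
    apply scalar_gronwall
      (f := fun s => max (-(S s)) 0 ^ 2 + max (-(TL s)) 0 ^ 2 + max (-(TI s)) 0 ^ 2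
        + max (-(TT s)) 0 ^ 2)
      (f' := fun s =>
        2 * max (-(S s)) 0 * (-(Lam - be * S s * TI s / N s - d * S s + r1 * TT s)) +
        2 * max (-(TL s)) 0 * (-(be * S s * TI s / N s - (d + k1) * TL s)) +
        2 * max (-(TI s)) 0 * (-(k1 * TL s - (d + dT + r) * TI s)) +
        2 * max (-(TT s)) 0 * (-(r * TI s - (r1 + d + dT) * TT s)))
      (K := 4 * B + 2 * (r1 + k1 + r))
    · exact (((contOn_maxsq hScont).add (contOn_maxsq hTLcont)).add
        (contOn_maxsq hTIcont)).add (contOn_maxsq hTTcont)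
    · intro s hs
      have h1 : HasDerivAt (fun u : ℝ => max (-(S u)) 0 ^ 2)
          (2 * max (-(S s)) 0 * (-(Lam - be * S s * TI s / N s - d * S s + r1 * TT s))) s :=
        (hasDerivAt_maxsq (-(S s))).comp (h₂ := fun y : ℝ => max y 0 ^ 2) s ((hS s hs.1).neg)
      have h2 : HasDerivAt (fun u : ℝ => max (-(TL u)) 0 ^ 2)
          (2 * max (-(TL s)) 0 * (-(be * S s * TI s / N s - (d + k1) * TL s))) s :=
        (hasDerivAt_maxsq (-(TL s))).comp (h₂ := fun y : ℝ => max y 0 ^ 2) s ((hTL s hs.1).neg)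
      have h3 : HasDerivAt (fun u : ℝ => max (-(TI u)) 0 ^ 2)
          (2 * max (-(TI s)) 0 * (-(k1 * TL s - (d + dT + r) * TI s))) s :=
        (hasDerivAt_maxsq (-(TI s))).comp (h₂ := fun y : ℝ => max y 0 ^ 2) s ((hTI s hs.1).neg)
      have h4 : HasDerivAt (fun u : ℝ => max (-(TT u)) 0 ^ 2)
          (2 * max (-(TT s)) 0 * (-(r * TI s - (r1 + d + dT) * TT s))) s :=
        (hasDerivAt_maxsq (-(TT s))).comp (h₂ := fun y : ℝ => max y 0 ^ 2) s ((hTT s hs.1).neg)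
      exact (((h1.add h2).add h3).add h4).hasDerivWithinAt
    · have e1 : max (-(S 0)) 0 = 0 := max_eq_right (neg_nonpos.2 h0.1)
      have e2 : max (-(TL 0)) 0 = 0 := max_eq_right (neg_nonpos.2 h0.2.1)
      have e3 : max (-(TI 0)) 0 = 0 := max_eq_right (neg_nonpos.2 h0.2.2.1)
      have e4 : max (-(TT 0)) 0 = 0 := max_eq_right (neg_nonpos.2 h0.2.2.2)
      simp [e1, e2, e3, e4]
    · intro s hs
      have hsIcc : s ∈ Icc (0:ℝ) t := ⟨hs.1, hs.2.le⟩
      have hNs : c ≤ N s := hcN s hsIcc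
      have hNp : 0 < N s := hNpos s hs.1
      have hSb : |S s| ≤ M := hMS s hsIcc
      have hTIb : |TI s| ≤ M := hMTI s hsIcc
      set w := be * S s * TI s / N s with hw
      set a := max (-(S s)) 0 with hadef
      set b := max (-(TL s)) 0 with hbdef2
      set ci := max (-(TI s)) 0 with hcidef
      set e := max (-(TT s)) 0 with hedef
      have ha0 : 0 ≤ a := hadef ▸ le_max_right _ _
      have hb0 : 0 ≤ b := hbdef2 ▸ le_max_right _ _
      have hci0 : 0 ≤ ci := hcidef ▸ le_max_right _ _
      have he0 : 0 ≤ e := hedef ▸ le_max_right _ _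
      have haS : a * S s = -(a ^ 2) := by
        rw [hadef]; linear_combination -(max_mul_self (-(S s)))
      have hbTL : b * TL s = -(b ^ 2) := by
        rw [hbdef2]; linear_combination -(max_mul_self (-(TL s)))
      have hciTI : ci * TI s = -(ci ^ 2) := by
        rw [hcidef]; linear_combination -(max_mul_self (-(TI s)))
      have heTT : e * TT s = -(e ^ 2) := by
        rw [hedef]; linear_combination -(max_mul_self (-(TT s)))
      have hae : a * (-(TT s)) ≤ a * e := by
        rw [hadef, hedef]; exact mul_le_mul_of_nonneg_left (le_max_left _ _) (le_max_right _ _)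
      have hcb : ci * (-(TL s)) ≤ ci * b := by
        rw [hcidef, hbdef2]; exact mul_le_mul_of_nonneg_left (le_max_left _ _) (le_max_right _ _)
      have hec : e * (-(TI s)) ≤ e * ci := by
        rw [hedef, hcidef]; exact mul_le_mul_of_nonneg_left (le_max_left _ _) (le_max_right _ _)
      have hSTI : -(S s * TI s) ≤ M * (a + ci) := by
        rw [hadef, hcidef]; exact neg_mul_le_aux hSb hTIb
      clear_value w a b ci e
      have hF1 : a * w ≤ B * a ^ 2 := by
        calc a * w = be * (a * S s) * TI s / N s := by rw [hw]; ring
          _ = be * a ^ 2 * (-(TI s)) / N s := by rw [haS]; ring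
          _ ≤ be * a ^ 2 * M / c :=
            div_le_div₀ (mul_nonneg (mul_nonneg hbe.le (sq_nonneg a)) hM0)
              (mul_le_mul_of_nonneg_left ((neg_le_abs (TI s)).trans hTIb)
                (mul_nonneg hbe.le (sq_nonneg a))) hc hNs
          _ = B * a ^ 2 := by rw [hBdef]; ring
      have hF2 : -(b * w) ≤ B * (b * a + b * ci) := by
        calc -(b * w) = be * (b * (-(S s * TI s))) / N s := by rw [hw]; ring
          _ ≤ be * (b * (M * (a + ci))) / c :=
            div_le_div₀ (mul_nonneg hbe.le (mul_nonneg hb0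
                (mul_nonneg hM0 (add_nonneg ha0 hci0))))
              (mul_le_mul_of_nonneg_left
                (mul_le_mul_of_nonneg_left hSTI hb0) hbe.le) hc hNs
          _ = B * (b * a + b * ci) := by rw [hBdef]; ring
      have hab : 2 * (b * a) ≤ a ^ 2 + b ^ 2 := by nlinarith [sq_nonneg (a - b)]
      have hbci : 2 * (b * ci) ≤ b ^ 2 + ci ^ 2 := by nlinarith [sq_nonneg (b - ci)]
      have haeq : 2 * (a * e) ≤ a ^ 2 + e ^ 2 := by nlinarith [sq_nonneg (a - e)]
      have hcbq : 2 * (ci * b) ≤ ci ^ 2 + b ^ 2 := by nlinarith [sq_nonneg (ci - b)]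
      have heciq : 2 * (e * ci) ≤ e ^ 2 + ci ^ 2 := by nlinarith [sq_nonneg (e - ci)]
      have hBab : B * (2 * (b * a)) ≤ B * (a ^ 2 + b ^ 2) :=
        mul_le_mul_of_nonneg_left hab hB0
      have hBbci : B * (2 * (b * ci)) ≤ B * (b ^ 2 + ci ^ 2) :=
        mul_le_mul_of_nonneg_left hbci hB0
      have hr1ae : r1 * (2 * (a * e)) ≤ r1 * (a ^ 2 + e ^ 2) :=
        mul_le_mul_of_nonneg_left haeq hr1.le
      have hk1cb : k1 * (2 * (ci * b)) ≤ k1 * (ci ^ 2 + b ^ 2) :=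
        mul_le_mul_of_nonneg_left hcbq hk1.le
      have hreci : r * (2 * (e * ci)) ≤ r * (e ^ 2 + ci ^ 2) :=
        mul_le_mul_of_nonneg_left heciq hr.le
      have hd_aS : d * (a * S s) = -(d * a ^ 2) := by rw [haS]; ring
      have hdk1_bTL : (d + k1) * (b * TL s) = -((d + k1) * b ^ 2) := by rw [hbTL]; ring
      have hddTr_ciTI : (d + dT + r) * (ci * TI s) = -((d + dT + r) * ci ^ 2) := by
        rw [hciTI]; ring
      have hr1ddT_eTT : (r1 + d + dT) * (e * TT s) = -((r1 + d + dT) * e ^ 2) := by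
        rw [heTT]; ring
      have hr1ae' : r1 * (a * -TT s) ≤ r1 * (a * e) := mul_le_mul_of_nonneg_left hae hr1.le
      have hk1cb' : k1 * (ci * -TL s) ≤ k1 * (ci * b) := mul_le_mul_of_nonneg_left hcb hk1.le
      have hrec' : r * (e * -TI s) ≤ r * (e * ci) := mul_le_mul_of_nonneg_left hec hr.le
      have n1 : 0 ≤ a * Lam := mul_nonneg ha0 hLam.le
      have n2 : 0 ≤ d * a ^ 2 := mul_nonneg hd.le (sq_nonneg a)
      have n3 : 0 ≤ (d + k1) * b ^ 2 := mul_nonneg (by positivity) (sq_nonneg b)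
      have n4 : 0 ≤ (d + dT + r) * ci ^ 2 := mul_nonneg (by positivity) (sq_nonneg ci)
      have n5 : 0 ≤ (r1 + d + dT) * e ^ 2 := mul_nonneg (by positivity) (sq_nonneg e)
      have p1 : 0 ≤ B * a ^ 2 := mul_nonneg hB0 (sq_nonneg a)
      have p2 : 0 ≤ B * b ^ 2 := mul_nonneg hB0 (sq_nonneg b)
      have p3 : 0 ≤ B * ci ^ 2 := mul_nonneg hB0 (sq_nonneg ci)
      have p4 : 0 ≤ B * e ^ 2 := mul_nonneg hB0 (sq_nonneg e)
      have q1 : 0 ≤ r1 * a ^ 2 := mul_nonneg hr1.le (sq_nonneg a)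
      have q2 : 0 ≤ r1 * b ^ 2 := mul_nonneg hr1.le (sq_nonneg b)
      have q3 : 0 ≤ r1 * ci ^ 2 := mul_nonneg hr1.le (sq_nonneg ci)
      have q4 : 0 ≤ r1 * e ^ 2 := mul_nonneg hr1.le (sq_nonneg e)
      have q5 : 0 ≤ k1 * a ^ 2 := mul_nonneg hk1.le (sq_nonneg a)
      have q6 : 0 ≤ k1 * b ^ 2 := mul_nonneg hk1.le (sq_nonneg b)
      have q7 : 0 ≤ k1 * ci ^ 2 := mul_nonneg hk1.le (sq_nonneg ci)
      have q8 : 0 ≤ k1 * e ^ 2 := mul_nonneg hk1.le (sq_nonneg e)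
      have q9 : 0 ≤ r * a ^ 2 := mul_nonneg hr.le (sq_nonneg a)
      have q10 : 0 ≤ r * b ^ 2 := mul_nonneg hr.le (sq_nonneg b)
      have q11 : 0 ≤ r * ci ^ 2 := mul_nonneg hr.le (sq_nonneg ci)
      have q12 : 0 ≤ r * e ^ 2 := mul_nonneg hr.le (sq_nonneg e)
      linarith [hF1, hF2, hd_aS, hdk1_bTL, hddTr_ciTI, hr1ddT_eTT,
        hr1ae', hk1cb', hrec', hBab, hBbci,
        hr1ae, hk1cb, hreci, n1, n2, n3, n4, n5, p1, p2, p3, p4,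
        q1, q2, q3, q4, q5, q6, q7, q8, q9, q10, q11, q12]
  -- nonnegativity of all components on [0, t]
  have hpos : ∀ s ∈ Icc (0:ℝ) t, 0 ≤ S s ∧ 0 ≤ TL s ∧ 0 ≤ TI s ∧ 0 ≤ TT s := by
    intro s hs
    have h := gle s hs
    refine ⟨maxsq_nonpos ?_, maxsq_nonpos ?_, maxsq_nonpos ?_, maxsq_nonpos ?_⟩ <;>
      nlinarith [sq_nonneg (max (-(S s)) 0), sq_nonneg (max (-(TL s)) 0),
        sq_nonneg (max (-(TI s)) 0), sq_nonneg (max (-(TT s)) 0)]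
  -- derivative of N
  have hNderiv : ∀ s ∈ Ico (0:ℝ) t,
      HasDerivAt N (Lam - d * N s - dT * (TI s + TT s)) s := by
    intro s hs
    have key := (((hS s hs.1).add (hTL s hs.1)).add (hTI s hs.1)).add (hTT s hs.1)
    have key2 : HasDerivAt (fun u => S u + TL u + TI u + TT u)
        (Lam - d * N s - dT * (TI s + TT s)) s := by
      exact key.congr_deriv (by rw [hN s]; ring)
    exact key2.congr_of_eventuallyEq (Eventually.of_forall fun u => hN u)
  -- Gronwall for the squared positive part of N - Lam/d
  have hb2 : ∀ s ∈ Icc (0:ℝ) t, max (N s - Lam / d) 0 ^ 2 ≤ 0 := by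
    apply scalar_gronwall
      (f := fun s => max (N s - Lam / d) 0 ^ 2)
      (f' := fun s => 2 * max (N s - Lam / d) 0 * (Lam - d * N s - dT * (TI s + TT s)))
      (K := 0)
    · apply ContinuousOn.pow
      exact fun x hx => ((hNcont x hx).sub continuousWithinAt_const).sup
        continuousWithinAt_const
    · intro s hs
      exact ((hasDerivAt_maxsq (N s - Lam / d)).comp s
        ((hNderiv s hs).sub_const (Lam / d))).hasDerivWithinAt
    · simp [max_eq_right (sub_nonpos.2 hN0le)]
    · intro s hs
      obtain ⟨-, -, hTIp, hTTp⟩ := hpos s ⟨hs.1, hs.2.le⟩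
      have hm0 : 0 ≤ max (N s - Lam / d) 0 := le_max_right _ _
      have hdd : d * (Lam / d) = Lam := by field_simp
      have hid := max_mul_self (N s - Lam / d)
      have hkey : max (N s - Lam / d) 0 * (Lam - d * N s)
          = -(d * max (N s - Lam / d) 0 ^ 2) := by
        linear_combination -((max (N s - Lam / d) 0) * hdd) - d * hid
      nlinarith [hkey, mul_nonneg hdT.le (mul_nonneg hm0 (add_nonneg hTIp hTTp)),
        mul_nonneg hd.le (sq_nonneg (max (N s - Lam / d) 0))]
  have htmem : t ∈ Icc (0:ℝ) t := ⟨ht, le_refl t⟩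
  refine ⟨hpos t htmem, ?_⟩
  have hfin := hb2 t htmem
  have : 0 ≤ Lam / d - N t := by
    apply maxsq_nonpos
    rw [neg_sub]
    exact hfin
  linarith
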